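/- (Combinatorial R-matrix on highest weight elements) Let r₁ ≤ r₂ and A ⊗ 0 be a classical highest weight element of B^{r₁,s₁} ⊗ B^{r₂,s₂}, with nonzero entries only at positions (r₁-j, r₂+j), 0 ≤ j ≤ k = min(r₁-1, n-r₂). Then the unique classical highest weight element Ã ⊗ 0 of B^{r₂,s₂} ⊗ B^{r₁,s₁} of the same classical weight has ã_{r₁-j, r₂+j} = a_{r₁-j, r₂+j} for all 0 ≤ j ≤ k (with à supported on the same antidiagonal, now viewed inside the r₂ × (n-r₂+1)-shaped polytope), i.e., the positions (r₁-j, r₂+j) lie in both index sets and the entries are equal. -/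

import Mathlib

open Finset

/-- Matrices of the polytope model: entry `a p q` for row `p`, column `q`. -/
abbrev Mat := ℕ → ℕ → ℕ

/-- A monotone lattice path `β(1) = (1,i), …, β(n) = (i,n)`: each step increases
the row or the column index by 1. -/
def IsPath (n i : ℕ) (β : ℕ → ℕ × ℕ) : Prop :=
  β 1 = (1, i) ∧ β n = (i, n) ∧
    ∀ s, 1 ≤ s → s < n →
      β (s + 1) = ((β s).1 + 1, (β s).2) ∨ β (s + 1) = ((β s).1, (β s).2 + 1)

/-- Membership in the Kirillov–Reshetikhin polytope `B^{i,m}` of type `A_n^{(1)}`: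
non-negative integer matrices indexed by `1 ≤ p ≤ i`, `i ≤ q ≤ n` (zero outside),
all of whose monotone lattice-path sums are at most `m`. -/
def MemKR (n i m : ℕ) (a : Mat) : Prop :=
  (∀ p q, ¬(1 ≤ p ∧ p ≤ i ∧ i ≤ q ∧ q ≤ n) → a p q = 0) ∧
  ∀ β : ℕ → ℕ × ℕ, IsPath n i β → ∑ s ∈ Icc 1 n, a (β s).1 (β s).2 ≤ m

/-- The set of maximizers of `F` on `S`. -/
def maximizers (S : Finset ℕ) (F : ℕ → ℕ) : Finset ℕ :=
  S.filter fun q => ∀ q' ∈ S, F q' ≤ F q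

/-- Smallest maximizer. -/
def argmaxLow (S : Finset ℕ) (F : ℕ → ℕ) : ℕ := WithTop.untopD 0 (maximizers S F).min

/-- Largest maximizer. -/
def argmaxHigh (S : Finset ℕ) (F : ℕ → ℕ) : ℕ := WithBot.unbotD 0 (maximizers S F).max

/-- For `l > i`: `G(q) = Σ_{j=1}^q a_{j,l-1} + Σ_{j=q}^i a_{j,l}`. -/
def Gplus (i : ℕ) (a : Mat) (l q : ℕ) : ℕ :=
  ∑ j ∈ Icc 1 q, a j (l - 1) + ∑ j ∈ Icc q i, a j l

/-- For `l < i`: `F(q) = Σ_{j=i}^q a_{l,j} + Σ_{j=q}^n a_{l+1,j}`. -/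
def Fminus (n i : ℕ) (a : Mat) (l q : ℕ) : ℕ :=
  ∑ j ∈ Icc i q, a l j + ∑ j ∈ Icc q n, a (l + 1) j

def pPlus (i : ℕ) (a : Mat) (l : ℕ) : ℕ := argmaxLow (Icc 1 i) (Gplus i a l)
def qPlus (i : ℕ) (a : Mat) (l : ℕ) : ℕ := argmaxHigh (Icc 1 i) (Gplus i a l)
def pMinus (n i : ℕ) (a : Mat) (l : ℕ) : ℕ := argmaxHigh (Icc i n) (Fminus n i a l)
def qMinus (n i : ℕ) (a : Mat) (l : ℕ) : ℕ := argmaxLow (Icc i n) (Fminus n i a l)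

/-- The statistic `φ_l` of the polytope model (`l = 0` is the affine one). -/
def phi (n i m : ℕ) (a : Mat) (l : ℕ) : ℤ :=
  if l = 0 then (a 1 n : ℤ)
  else if l = i then
    (m : ℤ) - ∑ j ∈ Icc 1 (i - 1), (a j i : ℤ) - ∑ j ∈ Icc i n, (a i j : ℤ)
  else if i < l then
    ∑ j ∈ Icc 1 (pPlus i a l), (a j (l - 1) : ℤ)
      - ∑ j ∈ Icc 1 (pPlus i a l - 1), (a j l : ℤ)
  else
    ∑ j ∈ Icc (pMinus n i a l) n, (a (l + 1) j : ℤ)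
      - ∑ j ∈ Icc (pMinus n i a l + 1) n, (a l j : ℤ)

/-- The statistic `ε_l` of the polytope model (`l = 0` is the affine one). -/
def eps (n i m : ℕ) (a : Mat) (l : ℕ) : ℤ :=
  if l = 0 then
    (m : ℤ) - ∑ j ∈ Icc i n, (a 1 j : ℤ) - ∑ j ∈ Icc 2 n, (a j n : ℤ)
  else if l = i then (a i i : ℤ)
  else if i < l then
    ∑ j ∈ Icc (qPlus i a l) i, (a j l : ℤ)
      - ∑ j ∈ Icc (qPlus i a l + 1) i, (a j (l - 1) : ℤ)
  else
    ∑ j ∈ Icc i (qMinus n i a l), (a l j : ℤ)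
      - ∑ j ∈ Icc i (qMinus n i a l - 1), (a (l + 1) j : ℤ)

/-- Update one entry of a matrix. -/
def upd (a : Mat) (p q v : ℕ) : Mat :=
  fun p' q' => if p' = p ∧ q' = q then v else a p' q'

/-- The Kashiwara raising operator `ẽ_l` on `B^{i,m}` (`l = 0` affine). -/
def eOp (n i m : ℕ) (a : Mat) (l : ℕ) : Option Mat :=
  if eps n i m a l ≤ 0 then none
  else some (
    if l = 0 then upd a 1 n (a 1 n + 1)
    else if l = i then upd a i i (a i i - 1)
    else if i < l then
      upd (upd a (qPlus i a l) (l - 1) (a (qPlus i a l) (l - 1) + 1))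
        (qPlus i a l) l (a (qPlus i a l) l - 1)
    else
      upd (upd a l (qMinus n i a l) (a l (qMinus n i a l) - 1))
        (l + 1) (qMinus n i a l) (a (l + 1) (qMinus n i a l) + 1))

/-- The Kashiwara lowering operator `f̃_l` on `B^{i,m}` (`l = 0` affine). -/
def fOp (n i m : ℕ) (a : Mat) (l : ℕ) : Option Mat :=
  if phi n i m a l ≤ 0 then none
  else some (
    if l = 0 then upd a 1 n (a 1 n - 1)
    else if l = i then upd a i i (a i i + 1)
    else if i < l then
      upd (upd a (pPlus i a l) (l - 1) (a (pPlus i a l) (l - 1) - 1))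
        (pPlus i a l) l (a (pPlus i a l) l + 1)
    else
      upd (upd a l (pMinus n i a l) (a l (pMinus n i a l) + 1))
        (l + 1) (pMinus n i a l) (a (l + 1) (pMinus n i a l) - 1))

/-- `ẽ_l` on the tensor product `B^{r₁,s₁} ⊗ B^{r₂,s₂}`. -/
def eTen (n r₁ s₁ r₂ s₂ l : ℕ) (x : Mat × Mat) : Option (Mat × Mat) :=
  if phi n r₂ s₂ x.2 l < eps n r₁ s₁ x.1 l then
    (eOp n r₁ s₁ x.1 l).map fun a' => (a', x.2)
  else (eOp n r₂ s₂ x.2 l).map fun b' => (x.1, b')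

/-- `f̃_l` on the tensor product `B^{r₁,s₁} ⊗ B^{r₂,s₂}`. -/
def fTen (n r₁ s₁ r₂ s₂ l : ℕ) (x : Mat × Mat) : Option (Mat × Mat) :=
  if phi n r₂ s₂ x.2 l ≤ eps n r₁ s₁ x.1 l then
    (fOp n r₁ s₁ x.1 l).map fun a' => (a', x.2)
  else (fOp n r₂ s₂ x.2 l).map fun b' => (x.1, b')

/-- Classical highest weight element of the tensor product. -/
def IsHW (n r₁ s₁ r₂ s₂ : ℕ) (x : Mat × Mat) : Prop :=
  ∀ l, 1 ≤ l → l ≤ n → eTen n r₁ s₁ r₂ s₂ l x = none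

/-- Cartan matrix of type `A_n`: `⟨α_r, α_j^∨⟩`. -/
def cartan (r j : ℕ) : ℤ :=
  if r = j then 2 else if r + 1 = j ∨ j + 1 = r then -1 else 0

/-- The pairing `⟨wt(A), α_j^∨⟩` where `wt(A) = m ω_i - Σ a_{p,q} α_{p,q}`,
and `α_{p,q} = α_p + ⋯ + α_q`. -/
def wtCoord (n i m : ℕ) (a : Mat) (j : ℕ) : ℤ :=
  (if j = i then (m : ℤ) else 0)
    - ∑ p ∈ Icc 1 i, ∑ q ∈ Icc i n, (a p q : ℤ) * ∑ r ∈ Icc p q, cartan r j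

/-- The matrix `b^Λ` with `(p,q)`-entry `c ((p+q) mod (n+1))` on the index range. -/
def bOf (n i : ℕ) (c : ℕ → ℕ) : Mat :=
  fun p q => if 1 ≤ p ∧ p ≤ i ∧ i ≤ q ∧ q ≤ n then c ((p + q) % (n + 1)) else 0

/-- if `A ⊗ 0` is a classical highest weight element of
`B^{r₁,s₁} ⊗ B^{r₂,s₂}` and `A' ⊗ 0` one of `B^{r₂,s₂} ⊗ B^{r₁,s₁}` of the same
classical weight, then the antidiagonal positions lie in both index sets and the
entries agree: `ã_{r₁-j, r₂+j} = a_{r₁-j, r₂+j}` for `0 ≤ j ≤ k`. -/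

lemma sum_Icc_split (f : ℕ → ℕ) {q i : ℕ} (h : q ≤ i) :
    ∑ j ∈ Icc 1 q, f j + ∑ j ∈ Icc (q+1) i, f j = ∑ j ∈ Icc 1 i, f j := by
  have h1 : Icc 1 q = Ioc 0 q := by rw [← Finset.Icc_add_one_left_eq_Ioc, zero_add]
  have h2 : Icc (q+1) i = Ioc q i := by rw [← Finset.Icc_add_one_left_eq_Ioc]
  have h3 : Icc 1 i = Ioc 0 i := by rw [← Finset.Icc_add_one_left_eq_Ioc, zero_add]
  rw [h1, h2, h3, Finset.sum_Ioc_consecutive _ (Nat.zero_le q) h]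

lemma sum_Icc_split' (f : ℕ → ℕ) {i q n : ℕ} (h0 : 1 ≤ q) (h1 : i ≤ q) (h2 : q ≤ n) :
    ∑ j ∈ Icc i (q-1), f j + ∑ j ∈ Icc q n, f j = ∑ j ∈ Icc i n, f j := by
  have e1 : Icc i (q-1) = Ico i q := by
    rw [← Finset.Ico_add_one_right_eq_Icc]; congr 1; omega
  have e2 : Icc q n = Ico q (n+1) := (Finset.Ico_add_one_right_eq_Icc q n).symm
  have e3 : Icc i n = Ico i (n+1) := (Finset.Ico_add_one_right_eq_Icc i n).symm
  rw [e1, e2, e3, Finset.sum_Ico_consecutive _ h1 (by omega)]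

lemma exists_maximizer {S : Finset ℕ} (F : ℕ → ℕ) (hS : S.Nonempty) :
    (maximizers S F).Nonempty := by
  obtain ⟨b, hb, hmax⟩ := S.exists_max_image F hS
  exact ⟨b, Finset.mem_filter.2 ⟨hb, hmax⟩⟩

lemma argmaxHigh_mem {S : Finset ℕ} (F : ℕ → ℕ) (hS : S.Nonempty) :
    argmaxHigh S F ∈ maximizers S F := by
  have hne := exists_maximizer F hS
  unfold argmaxHigh
  rw [← Finset.coe_max' hne]
  simpa using Finset.max'_mem _ hne

lemma argmaxLow_mem {S : Finset ℕ} (F : ℕ → ℕ) (hS : S.Nonempty) :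
    argmaxLow S F ∈ maximizers S F := by
  have hne := exists_maximizer F hS
  unfold argmaxLow
  rw [← Finset.coe_min' hne]
  exact Finset.min'_mem _ hne

lemma eps_plus (n i m : ℕ) (a : Mat) (l : ℕ) (hi : 1 ≤ i) (hil : i < l)
    (h : eps n i m a l ≤ 0) :
    ∀ q, 1 ≤ q → q ≤ i → ∑ j ∈ Icc q i, a j l ≤ ∑ j ∈ Icc (q+1) i, a j (l-1) := by
  intro q hq1 hqi
  rw [eps, if_neg (by omega : l ≠ 0), if_neg (by omega : l ≠ i), if_pos hil] at h
  have hspec := argmaxHigh_mem (Gplus i a l) (S := Icc 1 i) ⟨1, by rw [mem_Icc]; omega⟩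
  rw [maximizers, Finset.mem_filter] at hspec
  obtain ⟨hPmem, hPmax⟩ := hspec
  rw [mem_Icc] at hPmem
  set P := qPlus i a l with hPdef
  have hPP : argmaxHigh (Icc 1 i) (Gplus i a l) = P := rfl
  rw [hPP] at hPmem hPmax
  have h' : ∑ j ∈ Icc P i, a j l ≤ ∑ j ∈ Icc (P+1) i, a j (l-1) := by
    have := sub_nonpos.mp h
    exact_mod_cast this
  have hsP := sum_Icc_split (fun j => a j (l-1)) hPmem.2
  have hsq := sum_Icc_split (fun j => a j (l-1)) hqi
  have hGq := hPmax q (by rw [mem_Icc]; omega)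
  unfold Gplus at hGq
  omega

lemma eps_minus (n i m : ℕ) (a : Mat) (l : ℕ) (h1 : 1 ≤ l) (hl : l < i) (hin : i ≤ n)
    (h : eps n i m a l ≤ 0) :
    ∀ q, i ≤ q → q ≤ n → ∑ j ∈ Icc i q, a l j ≤ ∑ j ∈ Icc i (q-1), a (l+1) j := by
  intro q hiq hqn
  rw [eps, if_neg (by omega : l ≠ 0), if_neg (by omega : l ≠ i),
    if_neg (by omega : ¬ i < l)] at h
  have hspec := argmaxLow_mem (Fminus n i a l) (S := Icc i n) ⟨i, by rw [mem_Icc]; omega⟩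
  rw [maximizers, Finset.mem_filter] at hspec
  obtain ⟨hPmem, hPmax⟩ := hspec
  rw [mem_Icc] at hPmem
  set P := qMinus n i a l with hPdef
  have hPP : argmaxLow (Icc i n) (Fminus n i a l) = P := rfl
  rw [hPP] at hPmem hPmax
  have h' : ∑ j ∈ Icc i P, a l j ≤ ∑ j ∈ Icc i (P-1), a (l+1) j := by
    have := sub_nonpos.mp h
    exact_mod_cast this
  have hsP := sum_Icc_split' (fun j => a (l+1) j) (by omega : 1 ≤ P) hPmem.1 hPmem.2
  have hsq := sum_Icc_split' (fun j => a (l+1) j) (by omega : 1 ≤ q) hiq hqn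
  have hGq := hPmax q (by rw [mem_Icc]; omega)
  unfold Fminus at hGq
  omega

lemma phi_zero (n i m l : ℕ) (h1 : 1 ≤ l) (hne : l ≠ i) :
    phi n i m (fun _ _ => 0) l = 0 := by
  rw [phi, if_neg (by omega : l ≠ 0), if_neg hne]
  split_ifs <;> simp

lemma hw_eps (n i m r s : ℕ) (A : Mat) (hhw : IsHW n i m r s (A, fun _ _ => 0)) :
    ∀ l, 1 ≤ l → l ≤ n → l ≠ r → eps n i m A l ≤ 0 := by
  intro l hl1 hl2 hne
  have h := hhw l hl1 hl2
  simp only [eTen] at h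
  by_cases hc : phi n r s (fun _ _ => 0) l < eps n i m A l
  · rw [if_pos hc] at h
    by_contra hlt
    rw [eOp, if_neg (by omega)] at h
    simp at h
  · push_neg at hc
    rwa [phi_zero n r s l hl1 hne] at hc

lemma support (n i m r : ℕ) (hi : 1 ≤ i) (hin : i ≤ n) (hr : 1 ≤ r) (hrn : r ≤ n)
    (A : Mat) (hA : MemKR n i m A)
    (heps : ∀ l, 1 ≤ l → l ≤ n → l ≠ r → eps n i m A l ≤ 0) :
    ∀ p q, q ≠ i + r - p → A p q = 0 := by
  obtain ⟨hzero, -⟩ := hA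
  have row_i : ∀ q, q ≠ r → A i q = 0 := by
    intro q hq
    by_cases hqr : i ≤ q ∧ q ≤ n
    · rcases hqr.1.eq_or_lt with heq | hlt
      · have hir : i ≠ r := by omega
        have h := heps i hi hin hir
        rw [eps, if_neg (by omega : i ≠ 0), if_pos rfl] at h
        have h2 : A i i ≤ 0 := by exact_mod_cast h
        rw [← heq]
        omega
      · have h := eps_plus n i m A q hi hlt (heps q (by omega) hqr.2 hq) i hi le_rfl
        rw [Finset.Icc_self, Finset.sum_singleton,
          Finset.Icc_eq_empty (by omega), Finset.sum_empty] at h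
        omega
    · exact hzero i q (by omega)
  have main : ∀ d p, i - p ≤ d → ∀ q, q ≠ i + r - p → A p q = 0 := by
    intro d
    induction d with
    | zero =>
      intro p hp q hq
      have hip : i ≤ p := by omega
      rcases hip.eq_or_lt with heq | hlt
      · exact heq ▸ row_i q (by omega)
      · exact hzero p q (by omega)
    | succ d ih =>
      intro p hp q hq
      by_cases hd : i - p ≤ d
      · exact ih p hd q hq
      have hpi : p < i := by omega
      by_cases hp1 : 1 ≤ p
      swap
      · exact hzero p q (by omega)
      by_cases hqrange : i ≤ q ∧ q ≤ n
      swap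
      · exact hzero p q (by omega)
      have IH1 : ∀ q', q' ≠ i + r - (p+1) → A (p+1) q' = 0 :=
        fun q' h => ih (p+1) (by omega) q' h
      by_cases hcase : r < p
      · -- row p entirely zero
        have h := eps_minus n i m A p hp1 hpi hin
          (heps p hp1 (by omega) (by omega)) n hin le_rfl
        have hR : ∑ j ∈ Icc i (n-1), A (p+1) j = 0 :=
          Finset.sum_eq_zero fun j hj => IH1 j (by rw [mem_Icc] at hj; omega)
        have hL := Nat.le_zero.mp (hR ▸ h)
        exact Finset.sum_eq_zero_iff.mp hL q (by rw [mem_Icc]; omega)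
      · push_neg at hcase
        rcases Nat.lt_or_ge q (i + r - p) with hql | hqg
        · -- left of antidiagonal
          have h := eps_minus n i m A p hp1 hpi hin
            (heps p hp1 (by omega) (by omega)) (min (i + r - p - 1) n)
            (by omega) (by omega)
          have hR : ∑ j ∈ Icc i (min (i + r - p - 1) n - 1), A (p+1) j = 0 :=
            Finset.sum_eq_zero fun j hj => IH1 j (by rw [mem_Icc] at hj; omega)
          have hL := Nat.le_zero.mp (hR ▸ h)
          exact Finset.sum_eq_zero_iff.mp hL q (by rw [mem_Icc]; omega)
        · -- right of antidiagonal
          have hqc : i + r - p < q := by omega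
          have hiq : i < q := by omega
          have h := eps_plus n i m A q hi hiq
            (heps q (by omega) hqrange.2 (by omega)) p hp1 (by omega)
          have hR : ∑ j ∈ Icc (p+1) i, A j (q-1) = 0 :=
            Finset.sum_eq_zero fun j hj => by
              rw [mem_Icc] at hj
              exact ih j (by omega) (q-1) (by omega)
          have hL := Nat.le_zero.mp (hR ▸ h)
          exact Finset.sum_eq_zero_iff.mp hL p (by rw [mem_Icc]; omega)
  exact fun p q hq => main (i - p) p le_rfl q hq

lemma cartan_sum (p q j : ℕ) (hj : 1 ≤ j) :
    ∑ x ∈ Icc p q, cartan x j =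
      (if j ∈ Icc p q then (2:ℤ) else 0) - (if j+1 ∈ Icc p q then 1 else 0)
        - (if j-1 ∈ Icc p q then 1 else 0) := by
  have hpt : ∀ x, cartan x j =
      (if x = j then (2:ℤ) else 0) + (if x = j+1 then (-1:ℤ) else 0)
        + (if x = j-1 then (-1:ℤ) else 0) := by
    intro x
    unfold cartan
    split_ifs <;> omega
  rw [Finset.sum_congr rfl fun x _ => hpt x]
  rw [Finset.sum_add_distrib, Finset.sum_add_distrib,
    Finset.sum_ite_eq' (Icc p q) j, Finset.sum_ite_eq' (Icc p q) (j+1),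
    Finset.sum_ite_eq' (Icc p q) (j-1)]
  split_ifs <;> norm_num

lemma K_eval (p q j : ℕ) (hj : 1 ≤ j) :
    ∑ x ∈ Icc p q, cartan x j =
      (if p ≤ j ∧ j ≤ q then (2:ℤ) else 0) - (if p ≤ j+1 ∧ j+1 ≤ q then 1 else 0)
        - (if p ≤ j-1 ∧ j-1 ≤ q then 1 else 0) := by
  rw [cartan_sum p q j hj]; simp only [mem_Icc]

lemma wt_reduce (n i c₀ j : ℕ) (A : Mat) (hS : ∀ p q, q ≠ c₀ - p → A p q = 0) :
    ∑ p ∈ Icc 1 i, ∑ q ∈ Icc i n, (A p q : ℤ) * ∑ x ∈ Icc p q, cartan x j =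
      ∑ p ∈ Icc 1 i, (if c₀ - p ∈ Icc i n then
        (A p (c₀-p) : ℤ) * ∑ x ∈ Icc p (c₀-p), cartan x j else 0) := by
  refine Finset.sum_congr rfl fun p _ => ?_
  rw [show (∑ q ∈ Icc i n, (A p q :ℤ) * ∑ x ∈ Icc p q, cartan x j) =
      ∑ q ∈ Icc i n, (if q = c₀ - p then (A p q :ℤ) * ∑ x ∈ Icc p q, cartan x j else 0) from
    Finset.sum_congr rfl fun q _ => by
      by_cases hqc : q = c₀ - p
      · rw [if_pos hqc]
      · rw [if_neg hqc, hS p q hqc, Nat.cast_zero, zero_mul]]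
  exact Finset.sum_ite_eq' (Icc i n) (c₀ - p) _

lemma sum_one (i j : ℕ) (g : ℕ → ℤ) (h1 : 1 ≤ j) (h2 : j ≤ i)
    (hz : ∀ p ∈ Icc 1 i, p ≠ j → g p = 0) :
    ∑ p ∈ Icc 1 i, g p = g j := by
  rw [← Finset.sum_singleton g j]
  refine (Finset.sum_subset ?_ ?_).symm
  · intro x hx; rw [Finset.mem_singleton] at hx; rw [mem_Icc]; omega
  · intro x hx h2x
    rw [Finset.mem_singleton] at h2x
    exact hz x hx h2x

lemma sum_two (i j : ℕ) (g : ℕ → ℤ) (h1 : 1 ≤ j) (h2 : j + 1 ≤ i)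
    (hz : ∀ p ∈ Icc 1 i, p ≠ j → p ≠ j+1 → g p = 0) :
    ∑ p ∈ Icc 1 i, g p = g j + g (j+1) := by
  rw [← Finset.sum_pair (by omega : j ≠ j+1)]
  refine (Finset.sum_subset ?_ ?_).symm
  · intro x hx
    rw [Finset.mem_insert, Finset.mem_singleton] at hx
    rw [mem_Icc]; omega
  · intro x hx h2x
    rw [Finset.mem_insert, Finset.mem_singleton] at h2x
    push_neg at h2x
    exact hz x hx h2x.1 h2x.2

theorem stmt11 (n r₁ s₁ r₂ s₂ : ℕ) (h1 : 1 ≤ r₁) (h12 : r₁ ≤ r₂) (h2n : r₂ ≤ n)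
    (A A' : Mat) (hA : MemKR n r₁ s₁ A) (hA' : MemKR n r₂ s₂ A')
    (hhwA : IsHW n r₁ s₁ r₂ s₂ (A, fun _ _ => 0))
    (hhwA' : IsHW n r₂ s₂ r₁ s₁ (A', fun _ _ => 0))
    (hwt : ∀ j, 1 ≤ j → j ≤ n →
      wtCoord n r₁ s₁ A j + wtCoord n r₂ s₂ (fun _ _ => 0) j =
        wtCoord n r₂ s₂ A' j + wtCoord n r₁ s₁ (fun _ _ => 0) j) :
    ∀ j, j ≤ min (r₁ - 1) (n - r₂) →
      (1 ≤ r₁ - j ∧ r₁ - j ≤ r₂ ∧ r₂ ≤ r₂ + j ∧ r₂ + j ≤ n) ∧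
      A' (r₁ - j) (r₂ + j) = A (r₁ - j) (r₂ + j) := by
  have hS : ∀ p q, q ≠ r₁ + r₂ - p → A p q = 0 := fun p q h =>
    support n r₁ s₁ r₂ h1 (h12.trans h2n) (h1.trans h12) h2n A hA
      (hw_eps n r₁ s₁ r₂ s₂ A hhwA) p q h
  have hS' : ∀ p q, q ≠ r₁ + r₂ - p → A' p q = 0 := fun p q h =>
    support n r₂ s₂ r₁ (h1.trans h12) h2n h1 (h12.trans h2n) A' hA'
      (hw_eps n r₂ s₂ r₁ s₁ A' hhwA') p q (by omega)
  have hwz : ∀ (i m j : ℕ), wtCoord n i m (fun _ _ => 0) j = if j = i then (m:ℤ) else 0 := by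
    intro i m j; unfold wtCoord; simp
  have hwtS : ∀ j, 1 ≤ j → j ≤ n →
      (∑ p ∈ Icc 1 r₁, ∑ q ∈ Icc r₁ n, (A p q :ℤ) * ∑ x ∈ Icc p q, cartan x j) =
      ∑ p ∈ Icc 1 r₂, ∑ q ∈ Icc r₂ n, (A' p q :ℤ) * ∑ x ∈ Icc p q, cartan x j := by
    intro j hj1 hjn
    have h := hwt j hj1 hjn
    rw [hwz r₂ s₂ j, hwz r₁ s₁ j] at h
    unfold wtCoord at h
    split_ifs at h <;> linarith
  -- base case t = 0
  have hd0 : A' r₁ r₂ = A r₁ r₂ := by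
    have h := hwtS r₁ h1 (h12.trans h2n)
    rw [wt_reduce n r₁ (r₁+r₂) r₁ A hS, wt_reduce n r₂ (r₁+r₂) r₁ A' hS'] at h
    have hz1 : ∀ p ∈ Icc 1 r₁, p ≠ r₁ → (if r₁ + r₂ - p ∈ Icc r₁ n then
        (A p (r₁ + r₂ - p) : ℤ) * ∑ x ∈ Icc p (r₁ + r₂ - p), cartan x r₁ else 0) = 0 := by
      intro p hp hpne
      rw [mem_Icc] at hp
      split_ifs with hmem
      · rw [mem_Icc] at hmem
        refine mul_eq_zero_of_right _ ?_
        rw [K_eval _ _ _ h1]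
        split_ifs <;> omega
      · rfl
    have hz2 : ∀ p ∈ Icc 1 r₂, p ≠ r₁ → (if r₁ + r₂ - p ∈ Icc r₂ n then
        (A' p (r₁ + r₂ - p) : ℤ) * ∑ x ∈ Icc p (r₁ + r₂ - p), cartan x r₁ else 0) = 0 := by
      intro p hp hpne
      rw [mem_Icc] at hp
      split_ifs with hmem
      · rw [mem_Icc] at hmem
        refine mul_eq_zero_of_right _ ?_
        rw [K_eval _ _ _ h1]
        split_ifs <;> omega
      · rfl
    rw [sum_one r₁ r₁ _ h1 le_rfl hz1, sum_one r₂ r₁ _ h1 h12 hz2] at h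
    have hc : r₁ + r₂ - r₁ = r₂ := by omega
    rw [hc, if_pos (by rw [mem_Icc]; omega), if_pos (by rw [mem_Icc]; omega)] at h
    have hKpos : ∑ x ∈ Icc r₁ r₂, cartan x r₁ ≠ 0 := by
      rw [K_eval _ _ _ h1]
      split_ifs <;> omega
    have := mul_right_cancel₀ hKpos h
    exact_mod_cast this.symm
  -- inductive step
  have hstep : ∀ t, 1 ≤ t → t ≤ min (r₁-1) (n-r₂) →
      (A (r₁-t) (r₂+t) : ℤ) - (A (r₁-(t-1)) (r₂+(t-1)) : ℤ) =
      (A' (r₁-t) (r₂+t) : ℤ) - (A' (r₁-(t-1)) (r₂+(t-1)) : ℤ) := by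
    intro t ht1 htk
    set j := r₁ - t with hjdef
    have hj1 : 1 ≤ j := by omega
    have hjn : j ≤ n := by omega
    have h := hwtS j hj1 hjn
    rw [wt_reduce n r₁ (r₁+r₂) j A hS, wt_reduce n r₂ (r₁+r₂) j A' hS'] at h
    have hz1 : ∀ p ∈ Icc 1 r₁, p ≠ j → p ≠ j + 1 → (if r₁ + r₂ - p ∈ Icc r₁ n then
        (A p (r₁ + r₂ - p) : ℤ) * ∑ x ∈ Icc p (r₁ + r₂ - p), cartan x j else 0) = 0 := by
      intro p hp hpne1 hpne2
      rw [mem_Icc] at hp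
      split_ifs with hmem
      · rw [mem_Icc] at hmem
        refine mul_eq_zero_of_right _ ?_
        rw [K_eval _ _ _ hj1]
        split_ifs <;> omega
      · rfl
    have hz2 : ∀ p ∈ Icc 1 r₂, p ≠ j → p ≠ j + 1 → (if r₁ + r₂ - p ∈ Icc r₂ n then
        (A' p (r₁ + r₂ - p) : ℤ) * ∑ x ∈ Icc p (r₁ + r₂ - p), cartan x j else 0) = 0 := by
      intro p hp hpne1 hpne2
      rw [mem_Icc] at hp
      split_ifs with hmem
      · rw [mem_Icc] at hmem
        refine mul_eq_zero_of_right _ ?_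
        rw [K_eval _ _ _ hj1]
        split_ifs <;> omega
      · rfl
    rw [sum_two r₁ j _ hj1 (by omega) hz1, sum_two r₂ j _ hj1 (by omega) hz2] at h
    have hcj : r₁ + r₂ - j = r₂ + t := by omega
    have hcj1 : r₁ + r₂ - (j+1) = r₂ + t - 1 := by omega
    rw [hcj, hcj1] at h
    rw [if_pos (by rw [mem_Icc]; omega : r₂ + t ∈ Icc r₁ n),
      if_pos (by rw [mem_Icc]; omega : r₂ + t - 1 ∈ Icc r₁ n),
      if_pos (by rw [mem_Icc]; omega : r₂ + t ∈ Icc r₂ n),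
      if_pos (by rw [mem_Icc]; omega : r₂ + t - 1 ∈ Icc r₂ n)] at h
    have hK1 : ∑ x ∈ Icc j (r₂+t), cartan x j = 1 := by
      rw [K_eval _ _ _ hj1]
      split_ifs <;> omega
    have hK2 : ∑ x ∈ Icc (j+1) (r₂+t-1), cartan x j = -1 := by
      rw [K_eval _ _ _ hj1]
      split_ifs <;> omega
    rw [hK1, hK2] at h
    have e1 : r₁ - (t-1) = j + 1 := by omega
    have e2 : r₂ + (t-1) = r₂ + t - 1 := by omega
    rw [e1, e2]
    linarith
  have hd : ∀ t, t ≤ min (r₁-1) (n-r₂) → A' (r₁-t) (r₂+t) = A (r₁-t) (r₂+t) := by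
    intro t
    induction t with
    | zero => intro _; simpa using hd0
    | succ u ihu =>
      intro hle
      have h := hstep (u+1) (by omega) hle
      have hu := ihu (by omega)
      have e1 : u + 1 - 1 = u := by omega
      rw [e1] at h
      omega
  intro j hjk
  exact ⟨⟨by omega, by omega, by omega, by omega⟩, hd j hjk⟩
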